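/- Let γ=((a,b),(c,d)) be a 2×2 integer matrix with det γ ≠ 0, and let R be any complete set of coset representatives for ℤ² modulo the subgroup ℤ²γᵀ := {μγᵀ : μ∈ℤ²}. Then for every x ∈ ℝ²: Σ_{μ∈R} B̄₂(⟨x+μ, γ⁻¹_{1*}⟩) = (gcd(b,d)²/|det γ|)·B̄₂((det γ/gcd(b,d))·⟨x, γ⁻¹_{1*}⟩) and Σ_{μ∈R} B̄₂(⟨x+μ, γ⁻¹_{2*}⟩) = (gcd(a,c)²/|det γ|)·B̄₂((det γ/gcd(a,c))·⟨x, γ⁻¹_{2*}⟩), where γ⁻¹_{1*} = (d,−b)/det γ and γ⁻¹_{2*} = (−c,a)/det γ are the rows of γ⁻¹ and ⟨·,·⟩ is the dot product. In particular these sums are independent of the choice of R. -/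

import Mathlib

open scoped Pointwise Classical
open MeasureTheory

/-- Periodic Bernoulli function `B̄₁`. -/
noncomputable def B1 (y : ℝ) : ℝ := if ∃ n : ℤ, (n : ℝ) = y then 0 else Int.fract y - 1 / 2

/-- Periodic Bernoulli function `B̄₂`. -/
noncomputable def B2 (y : ℝ) : ℝ := Int.fract y ^ 2 - Int.fract y + 1 / 6

/-- Dedekind–Rademacher sum `S(a,c;x)`. -/
noncomputable def DR (a c : ℤ) (x₁ x₂ : ℝ) : ℝ :=
  ∑ m ∈ Finset.range c.natAbs, B1 (x₁ + (x₂ + m) * a / c) * B1 ((x₂ + m) / c)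

/-- Indicator function of `ℤ ⊆ ℚ`. -/
def indZ (q : ℚ) : ℝ := if q.den = 1 then 1 else 0

/-- The cocycle `𝔷₀(γ)(x, ω)` for `γ` with entries `a, b, c, d` and `c ≠ 0`;
only `a` and `c` enter the formula. -/
noncomputable def Z0 (a c : ℤ) (x₁ x₂ : ℚ) (ω₁ ω₂ : ℝ) : ℝ :=
  (Int.gcd a c : ℝ) ^ 2 / (2 * c * ((a : ℝ) + c * (ω₂ / ω₁))) *
      B2 (((c : ℝ) / (Int.gcd a c : ℝ)) * (x₁ : ℝ) - ((a : ℝ) / (Int.gcd a c : ℝ)) * (x₂ : ℝ))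
    + ((a : ℝ) + c * (ω₂ / ω₁)) / (2 * c) * B2 (x₂ : ℝ)
    + Real.sign (c : ℝ) * DR (-a) c (x₁ : ℝ) (x₂ : ℝ)
    - Real.sign ((c : ℝ) * ((a : ℝ) + c * (ω₂ / ω₁))) / 4 * indZ x₁ * indZ x₂

/-- The closed triangle `T_γ` in `ℝ²` with vertices `(0,0)`, `(a−1,c)`, `(−1,0)`. -/
def Tri (a c : ℤ) : Set (ℝ × ℝ) :=
  convexHull ℝ {((0 : ℝ), (0 : ℝ)), (((a : ℝ) - 1), (c : ℝ)), ((-1 : ℝ), (0 : ℝ))}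

/-- Number of integral points in a subset of `ℝ²`. -/
noncomputable def latticeCount (S : Set (ℝ × ℝ)) : ℕ :=
  Set.ncard {p : ℤ × ℤ | ((p.1 : ℝ), (p.2 : ℝ)) ∈ S}

/-- The `0`th Ehrhart coefficient `G₀(ℓ⁻¹ T_σ, m)` of the dilated triangle `ℓ⁻¹ T_σ`,
obtained by subtracting the second and first Ehrhart coefficient terms from the
lattice point count of `(m/ℓ)·T_σ`. -/
noncomputable def G0 (aσ cσ : ℤ) (ℓσ ℓ : ℕ) (m : ℕ) : ℝ :=
  (latticeCount (((m : ℝ) / (ℓ : ℝ)) • Tri aσ cσ) : ℝ)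
    - (cσ : ℝ) / (2 * (ℓ : ℝ) ^ 2) * (m : ℝ) ^ 2
    - ((ℓσ : ℝ) + 2) / (2 * (ℓ : ℝ)) * (m : ℝ)


section Statement5Aux

lemma B2_add_int (y : ℝ) (n : ℤ) : B2 (y + n) = B2 y := by
  simp [B2, Int.fract_add_intCast]

lemma B2_neg (y : ℝ) : B2 (-y) = B2 y := by
  unfold B2
  rcases eq_or_ne (Int.fract y) 0 with h | h
  · rw [Int.fract_neg_eq_zero.mpr h, h]
  · rw [Int.fract_neg h]; ring

lemma sr1 (n : ℕ) : ∑ k ∈ Finset.range n, (k : ℝ) = n * (n - 1) / 2 := by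
  induction n with
  | zero => simp
  | succ m ih => rw [Finset.sum_range_succ, ih]; push_cast; ring

lemma sr2 (n : ℕ) : ∑ k ∈ Finset.range n, (k : ℝ) ^ 2 = n * (n - 1) * (2 * n - 1) / 6 := by
  induction n with
  | zero => simp
  | succ m ih => rw [Finset.sum_range_succ, ih]; push_cast; ring


lemma B2_mult (N : ℕ) (hN : 0 < N) (y : ℝ) :
    ∑ k ∈ Finset.range N, B2 (y + (k : ℝ) / N) = (1 / N) * B2 (N * y) := by
  haveI : NeZero N := ⟨hN.ne'⟩
  have hNr : (0:ℝ) < N := by exact_mod_cast hN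
  set m : ℤ := ⌊(N:ℝ) * y⌋ with hm
  set y₀ : ℝ := Int.fract ((N:ℝ) * y) / N with hy₀
  have hf := Int.floor_add_fract ((N:ℝ) * y)
  have hy : y = y₀ + m / N := by
    rw [hy₀, ← add_div, eq_div_iff hNr.ne']; linarith
  have h0 : 0 ≤ y₀ := div_nonneg (Int.fract_nonneg _) hNr.le
  have h1 : y₀ < 1 / N := by
    rw [hy₀, div_lt_div_iff₀ hNr hNr]
    nlinarith [Int.fract_lt_one ((N:ℝ) * y)]
  have hc0 : 0 ≤ m % N := Int.emod_nonneg m (by exact_mod_cast hN.ne')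
  have hcN : m % N < N := Int.emod_lt_of_pos m (by exact_mod_cast hN)
  set c : Fin N := ⟨(m % N).toNat, by omega⟩ with hcdef
  have hcval : ((c : ℕ) : ℤ) = m % N := by
    simp only [hcdef]; exact Int.toNat_of_nonneg hc0
  -- termwise claim
  have hterm : ∀ k : Fin N, B2 (y + ((k:ℕ) : ℝ) / N)
      = B2 (y₀ + (((c + k : Fin N) : ℕ) : ℝ) / N) := by
    intro k
    have hval : (((c + k : Fin N) : ℕ) : ℤ) = (((c:ℕ):ℤ) + ((k:ℕ):ℤ)) % (N:ℤ) := by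
      rw [Fin.val_add]
      exact_mod_cast Int.natCast_mod ((c:ℕ) + (k:ℕ)) N
    have hmodeq : (m + ((k:ℕ):ℤ)) % (N:ℤ) = (((c + k : Fin N) : ℕ) : ℤ) % N := by
      rw [hval, Int.emod_emod_of_dvd _ dvd_rfl, hcval, Int.emod_add_emod]
    have hdvd : (N:ℤ) ∣ (m + ((k:ℕ):ℤ)) - (((c + k : Fin N) : ℕ) : ℤ) :=
      Int.ModEq.dvd (Int.ModEq.symm hmodeq)
    obtain ⟨t, ht⟩ := hdvd
    have htr : ((m:ℝ) + ((k:ℕ):ℝ)) - (((c + k : Fin N) : ℕ) : ℝ) = (N:ℝ) * t := by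
      exact_mod_cast congrArg (Int.cast : ℤ → ℝ) ht
    have harg : y + ((k:ℕ) : ℝ) / N = (y₀ + (((c + k : Fin N) : ℕ) : ℝ) / N) + (t : ℤ) := by
      rw [hy]
      field_simp
      push_cast
      linarith [htr]
    rw [harg, B2_add_int]
  -- reindex
  rw [← Fin.sum_univ_eq_sum_range (fun k => B2 (y + (k:ℝ)/N))]
  rw [Fintype.sum_equiv (Equiv.addLeft c) _ (fun j : Fin N => B2 (y₀ + ((j:ℕ) : ℝ) / N))
      (fun k => hterm k)]
  rw [Fin.sum_univ_eq_sum_range (fun j => B2 (y₀ + (j:ℝ)/N))]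
  -- evaluate
  have heval : ∀ j ∈ Finset.range N, B2 (y₀ + (j : ℝ) / N)
      = (y₀^2 - y₀ + 1/6) + (2*y₀/N - 1/N) * j + (1/N^2) * (j:ℝ)^2 := by
    intro j hj
    rw [Finset.mem_range] at hj
    have hjN : (j : ℝ) ≤ N - 1 := by
      have : (j : ℝ) + 1 ≤ N := by exact_mod_cast hj
      linarith
    have hone : 1/(N:ℝ) + (N-1)/N = 1 := by field_simp; ring
    have hjd : (j:ℝ)/N ≤ ((N:ℝ)-1)/N := by gcongr
    have hfr : Int.fract (y₀ + (j : ℝ) / N) = y₀ + (j : ℝ) / N := by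
      rw [Int.fract_eq_self]
      refine ⟨by positivity, by linarith⟩
    unfold B2; rw [hfr]; field_simp; ring
  rw [Finset.sum_congr rfl heval]
  rw [Finset.sum_add_distrib, Finset.sum_add_distrib, Finset.sum_const, ← Finset.mul_sum,
    ← Finset.mul_sum, sr1, sr2]
  have hfr2 : Int.fract ((N:ℝ) * y) = (N:ℝ) * y₀ := by rw [hy₀]; field_simp
  unfold B2
  rw [hfr2]
  simp only [Finset.card_range]
  field_simp
  ring


lemma B2_mult' (N₀ : ℤ) (h : N₀ ≠ 0) (y : ℝ) :
    ∑ k ∈ Finset.range N₀.natAbs, B2 (y + (k:ℝ) / (N₀:ℝ))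
      = (1 / (N₀.natAbs : ℝ)) * B2 ((N₀:ℝ) * y) := by
  have hN : 0 < N₀.natAbs := Int.natAbs_pos.mpr h
  rcases Int.natAbs_eq N₀ with he | he
  · have hr : (N₀ : ℝ) = (N₀.natAbs : ℝ) := by
      rw [Nat.cast_natAbs, Int.cast_abs]
      have hge : (0:ℝ) ≤ (N₀:ℝ) := by
        have : 0 ≤ N₀ := by omega
        exact_mod_cast this
      exact (abs_of_nonneg hge).symm
    rw [hr]; exact B2_mult _ hN y
  · have hr : (N₀ : ℝ) = -(N₀.natAbs : ℝ) := by exact_mod_cast congrArg (Int.cast : ℤ → ℝ) he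
    rw [hr]
    have : ∀ k ∈ Finset.range N₀.natAbs,
        B2 (y + (k:ℝ) / -(N₀.natAbs:ℝ)) = B2 (-y + (k:ℝ) / (N₀.natAbs:ℝ)) := by
      intro k _
      rw [← B2_neg (-y + (k:ℝ)/(N₀.natAbs:ℝ))]
      ring_nf
    rw [Finset.sum_congr rfl this, B2_mult _ hN (-y)]
    congr 1
    rw [show (N₀.natAbs:ℝ) * -y = -((N₀.natAbs:ℝ) * y) by ring,
      show -(N₀.natAbs:ℝ) * y = -((N₀.natAbs:ℝ) * y) by ring]


lemma mainlem (D : ℤ) (hD : D ≠ 0) (p q p' q' u v ε : ℤ) (g : ℕ) (hg : 0 < g)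
    (hp : p = g * p') (hq : q = g * q') (hbez : u * p' + v * q' = 1)
    (hε2 : ε * ε = 1)
    (w₁ w₂ : ℤ × ℤ) (hw₁ : p * w₁.1 + q * w₁.2 = D)
    (hw₂1 : w₂.1 = -(ε * g * q')) (hw₂2 : w₂.2 = ε * g * p')
    (R : Finset (ℤ × ℤ))
    (hR : ∀ μ : ℤ × ℤ, ∃! ρ : ℤ × ℤ, ρ ∈ R ∧
      ∃ ν₁ ν₂ : ℤ, μ.1 - ρ.1 = ν₁ * w₁.1 + ν₂ * w₂.1 ∧ μ.2 - ρ.2 = ν₁ * w₁.2 + ν₂ * w₂.2)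
    (X : ℝ) :
    ∑ μ ∈ R, B2 ((X + ((p * μ.1 + q * μ.2 : ℤ) : ℝ)) / (D : ℝ))
      = (g : ℝ) ^ 2 / |(D : ℝ)| * B2 (((D:ℝ) / (g:ℝ)) * (X / (D:ℝ))) := by
  have hgz : (0:ℤ) < (g:ℤ) := by exact_mod_cast hg
  set N₀ : ℤ := p' * w₁.1 + q' * w₁.2 with hN₀def
  have hgN : (g:ℤ) * N₀ = D := by
    rw [hN₀def]; linear_combination hw₁ - w₁.1 * hp - w₁.2 * hq
  have hN₀ : N₀ ≠ 0 := by
    intro h; rw [← hgN, h, mul_zero] at hD; exact hD rfl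
  set N : ℕ := N₀.natAbs with hNdef
  have hNpos : 0 < N := Int.natAbs_pos.mpr hN₀
  have hNzd : (N:ℤ) ∣ N₀ := Int.natAbs_dvd.mpr dvd_rfl
  have hNz0 : (N:ℤ) ≠ 0 := by exact_mod_cast hNpos.ne'
  set e : ℤ := -v * w₁.1 + u * w₁.2 with hedef
  -- coordinate equivalence
  have H2 : ∀ μ ρ : ℤ × ℤ,
      (∃ ν₁ ν₂ : ℤ, μ.1 - ρ.1 = ν₁ * w₁.1 + ν₂ * w₂.1 ∧ μ.2 - ρ.2 = ν₁ * w₁.2 + ν₂ * w₂.2)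
      ↔ (∃ ν₁ ν₂ : ℤ, (p' * μ.1 + q' * μ.2) - (p' * ρ.1 + q' * ρ.2) = ν₁ * N₀
          ∧ (-v * μ.1 + u * μ.2) - (-v * ρ.1 + u * ρ.2) = ν₁ * e + ν₂ * g) := by
    intro μ ρ
    constructor
    · rintro ⟨ν₁, ν₂, h1, h2⟩
      refine ⟨ν₁, ν₂ * ε, ?_, ?_⟩
      · rw [hN₀def]
        linear_combination p' * h1 + q' * h2 + (ν₂ * p') * hw₂1 + (ν₂ * q') * hw₂2
      · rw [hedef]
        linear_combination (-v) * h1 + u * h2 + (-ν₂ * v) * hw₂1 + (ν₂ * u) * hw₂2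
          + ν₂ * ε * (g:ℤ) * hbez
    · rintro ⟨ν₁, ν₂, h1, h2⟩
      rw [hN₀def] at h1
      rw [hedef] at h2
      refine ⟨ν₁, ν₂ * ε, ?_, ?_⟩
      · linear_combination u * h1 - q' * h2 + (ν₁ * w₁.1 - (μ.1 - ρ.1)) * hbez
          + (-ν₂ * ε) * hw₂1 + ν₂ * (g:ℤ) * q' * hε2
      · linear_combination v * h1 + p' * h2 + (ν₁ * w₁.2 - (μ.2 - ρ.2)) * hbez
          + (-ν₂ * ε) * hw₂2 + (-ν₂ * (g:ℤ) * p') * hε2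
  -- reduction map and pick map
  set jm : ℤ × ℤ → ℕ × ℕ := fun ρ =>
    (((p' * ρ.1 + q' * ρ.2) % (N:ℤ)).toNat,
     (((-v * ρ.1 + u * ρ.2) -
        ((p' * ρ.1 + q' * ρ.2 - (p' * ρ.1 + q' * ρ.2) % (N:ℤ)) / N₀) * e) % (g:ℤ)).toNat)
    with hjmdef
  set im : ℕ × ℕ → ℤ × ℤ := fun b =>
    (hR ((u * b.1 - q' * b.2 : ℤ), (v * b.1 + p' * b.2 : ℤ))).choose with himdef
  have hNzpos : (0:ℤ) < (N:ℤ) := by exact_mod_cast hNpos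
  -- facts about jm
  have hjm : ∀ ρ : ℤ × ℤ, ((jm ρ).1 < N ∧ (jm ρ).2 < g) ∧ ∃ ν₁ ν₂ : ℤ,
      (p' * ρ.1 + q' * ρ.2) - ((jm ρ).1 : ℤ) = ν₁ * N₀ ∧
      (-v * ρ.1 + u * ρ.2) - ((jm ρ).2 : ℤ) = ν₁ * e + ν₂ * g := by
    intro ρ
    simp only [hjmdef]
    set σ : ℤ := p' * ρ.1 + q' * ρ.2 with hσ
    set τ : ℤ := -v * ρ.1 + u * ρ.2 with hτ
    have hs0 : 0 ≤ σ % (N:ℤ) := Int.emod_nonneg _ hNz0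
    have hsN : σ % (N:ℤ) < N := Int.emod_lt_of_pos _ hNzpos
    have hdvd1 : N₀ ∣ σ - σ % (N:ℤ) :=
      Int.natAbs_dvd.mp (Int.dvd_self_sub_of_emod_eq rfl)
    have hν₁ : N₀ * ((σ - σ % (N:ℤ)) / N₀) = σ - σ % (N:ℤ) := Int.mul_ediv_cancel' hdvd1
    set ν₁ : ℤ := (σ - σ % (N:ℤ)) / N₀ with hν₁def
    set τ' : ℤ := τ - ν₁ * e with hτ'
    have ht0 : 0 ≤ τ' % (g:ℤ) := Int.emod_nonneg _ hgz.ne'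
    have htg : τ' % (g:ℤ) < g := Int.emod_lt_of_pos _ hgz
    have hdvd2 : (g:ℤ) ∣ τ' - τ' % (g:ℤ) := Int.dvd_self_sub_of_emod_eq rfl
    have hν₂ : (g:ℤ) * ((τ' - τ' % (g:ℤ)) / (g:ℤ)) = τ' - τ' % (g:ℤ) :=
      Int.mul_ediv_cancel' hdvd2
    refine ⟨⟨?_, ?_⟩, ν₁, (τ' - τ' % (g:ℤ)) / (g:ℤ), ?_, ?_⟩
    · omega
    · omega
    · rw [Int.toNat_of_nonneg hs0]; linarith [hν₁]
    · rw [Int.toNat_of_nonneg ht0]; linarith [hν₂]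
  -- phi coordinate identities
  have hsC_phi : ∀ s t : ℤ, p' * (u * s - q' * t) + q' * (v * s + p' * t) = s := by
    intro s t; linear_combination s * hbez
  have htC_phi : ∀ s t : ℤ, -v * (u * s - q' * t) + u * (v * s + p' * t) = t := by
    intro s t; linear_combination t * hbez
  have key : ∑ μ ∈ R, B2 ((X + ((p * μ.1 + q * μ.2 : ℤ) : ℝ)) / (D : ℝ))
      = ∑ b ∈ Finset.range N ×ˢ Finset.range g, B2 ((X + (g:ℝ) * (b.1:ℝ)) / (D:ℝ)) := by
    refine Finset.sum_nbij' jm im ?_ ?_ ?_ ?_ ?_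
    · intro ρ _
      rcases hjm ρ with ⟨⟨h1, h2⟩, -⟩
      exact Finset.mem_product.mpr ⟨Finset.mem_range.mpr h1, Finset.mem_range.mpr h2⟩
    · intro b _
      exact (hR _).choose_spec.1.1
    · -- left inverse
      intro ρ hρ
      rcases hjm ρ with ⟨-, ν₁, ν₂, hc1, hc2⟩
      have hwf : ∃ ν₁' ν₂' : ℤ,
          ((u * ((jm ρ).1:ℤ) - q' * ((jm ρ).2:ℤ), v * ((jm ρ).1:ℤ) + p' * ((jm ρ).2:ℤ)) : ℤ × ℤ).1 - ρ.1
            = ν₁' * w₁.1 + ν₂' * w₂.1 ∧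
          ((u * ((jm ρ).1:ℤ) - q' * ((jm ρ).2:ℤ), v * ((jm ρ).1:ℤ) + p' * ((jm ρ).2:ℤ)) : ℤ × ℤ).2 - ρ.2
            = ν₁' * w₁.2 + ν₂' * w₂.2 := by
        refine (H2 _ ρ).mpr ⟨-ν₁, -ν₂, ?_, ?_⟩
        · show p' * (u * ((jm ρ).1:ℤ) - q' * ((jm ρ).2:ℤ))
              + q' * (v * ((jm ρ).1:ℤ) + p' * ((jm ρ).2:ℤ))
              - (p' * ρ.1 + q' * ρ.2) = -ν₁ * N₀
          rw [hsC_phi]; linarith [hc1]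
        · show -v * (u * ((jm ρ).1:ℤ) - q' * ((jm ρ).2:ℤ))
              + u * (v * ((jm ρ).1:ℤ) + p' * ((jm ρ).2:ℤ))
              - (-v * ρ.1 + u * ρ.2) = -ν₁ * e + -ν₂ * g
          rw [htC_phi]; linarith [hc2]
      exact ((hR ((u * ((jm ρ).1:ℤ) - q' * ((jm ρ).2:ℤ),
        v * ((jm ρ).1:ℤ) + p' * ((jm ρ).2:ℤ)) : ℤ × ℤ)).choose_spec.2 ρ ⟨hρ, hwf⟩).symm
    · -- right inverse
      intro b hb
      have hbm : b.1 < N ∧ b.2 < g := by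
        rw [Finset.mem_product, Finset.mem_range, Finset.mem_range] at hb; exact hb
      obtain ⟨hk, hm⟩ := hbm
      simp only [himdef]
      obtain ⟨ν₁, ν₂, hc1, hc2⟩ :=
        (H2 ((u * (b.1:ℤ) - q' * (b.2:ℤ)), (v * (b.1:ℤ) + p' * (b.2:ℤ)))
          ((hR ((u * (b.1:ℤ) - q' * (b.2:ℤ)), (v * (b.1:ℤ) + p' * (b.2:ℤ)))).choose)).mp
          (hR _).choose_spec.1.2
      set ρ := (hR ((u * (b.1:ℤ) - q' * (b.2:ℤ)), (v * (b.1:ℤ) + p' * (b.2:ℤ)))).choose with hρdef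
      dsimp only at hc1 hc2
      rw [hsC_phi] at hc1
      rw [htC_phi] at hc2
      have hσ : p' * ρ.1 + q' * ρ.2 = (b.1:ℤ) - ν₁ * N₀ := by linarith [hc1]
      have hτ : -v * ρ.1 + u * ρ.2 = (b.2:ℤ) - ν₁ * e - ν₂ * g := by linarith [hc2]
      simp only [hjmdef]
      obtain ⟨w, hw⟩ := hNzd
      have h1 : (p' * ρ.1 + q' * ρ.2) % (N:ℤ) = (b.1:ℤ) := by
        rw [hσ, hw, show (b.1:ℤ) - ν₁ * ((N:ℤ) * w) = (b.1:ℤ) + (N:ℤ) * (-ν₁ * w) by ring,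
          Int.add_mul_emod_self_left]
        exact Int.emod_eq_of_lt (by positivity) (by exact_mod_cast hk)
      have h2 : (p' * ρ.1 + q' * ρ.2 - (b.1:ℤ)) / N₀ = -ν₁ := by
        rw [hσ, show (b.1:ℤ) - ν₁ * N₀ - (b.1:ℤ) = -ν₁ * N₀ by ring,
          Int.mul_ediv_cancel _ hN₀]
      rw [h1, h2]
      have h3 : -v * ρ.1 + u * ρ.2 - -ν₁ * e = (b.2:ℤ) + (g:ℤ) * (-ν₂) := by
        rw [hτ]; ring
      rw [h3, Int.add_mul_emod_self_left]
      rw [Int.emod_eq_of_lt (by positivity) (by exact_mod_cast hm)]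
      rw [Int.toNat_natCast, Int.toNat_natCast]
    · -- values
      intro ρ _
      rcases hjm ρ with ⟨-, ν₁, ν₂, hc1, -⟩
      have hz : (p * ρ.1 + q * ρ.2 : ℤ) = (g:ℤ) * (((jm ρ).1:ℕ):ℤ) + ν₁ * D := by
        rw [← hgN]
        linear_combination ρ.1 * hp + ρ.2 * hq + (g:ℤ) * hc1
      have hDr : (D:ℝ) ≠ 0 := by exact_mod_cast hD
      have harg : (X + ((p * ρ.1 + q * ρ.2 : ℤ):ℝ)) / (D:ℝ)
          = (X + (g:ℝ) * (((jm ρ).1:ℕ):ℝ)) / (D:ℝ) + ((ν₁:ℤ):ℝ) := by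
        rw [hz]; push_cast; field_simp; ring
      rw [harg, B2_add_int]
  rw [key, Finset.sum_product]
  simp only [Finset.sum_const, Finset.card_range, nsmul_eq_mul]
  rw [← Finset.mul_sum]
  have hDr : (D:ℝ) ≠ 0 := by exact_mod_cast hD
  have hgr : (g:ℝ) ≠ 0 := by exact_mod_cast hg.ne'
  have hN₀r : (N₀:ℝ) ≠ 0 := by exact_mod_cast hN₀
  have hgNr : (g:ℝ) * (N₀:ℝ) = (D:ℝ) := by exact_mod_cast hgN
  have hterm : ∀ k ∈ Finset.range N,
      B2 ((X + (g:ℝ)*(k:ℝ))/(D:ℝ)) = B2 (X/(D:ℝ) + (k:ℝ)/(N₀:ℝ)) := by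
    intro k _
    congr 1
    rw [add_div, ← hgNr, mul_div_mul_left _ _ hgr]
  rw [Finset.sum_congr rfl hterm]
  have hmult := B2_mult' N₀ hN₀ (X/(D:ℝ))
  rw [← hNdef] at hmult
  rw [hmult]
  have hNabs : (N:ℝ) = |(N₀:ℝ)| := by
    rw [hNdef, Nat.cast_natAbs, Int.cast_abs]
  have habs : |(D:ℝ)| = (g:ℝ) * (N:ℝ) := by
    rw [← hgNr, abs_mul, abs_of_nonneg (by positivity : (0:ℝ) ≤ (g:ℝ)), hNabs]
  have hDg : (D:ℝ)/(g:ℝ) = (N₀:ℝ) := by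
    rw [← hgNr]; field_simp
  rw [hDg, habs]
  have hNr0 : (N:ℝ) ≠ 0 := by exact_mod_cast hNpos.ne'
  field_simp


end Statement5Aux

/-- **Theorem (Statement 5).** Distribution relation for sums of `B̄₂` over coset
representatives of `ℤ²` modulo `ℤ²γᵀ`. -/
theorem statement5 (a b c d : ℤ) (hdet : a * d - b * c ≠ 0) (R : Finset (ℤ × ℤ))
    (hR : ∀ μ : ℤ × ℤ, ∃! ρ : ℤ × ℤ, ρ ∈ R ∧
      ∃ ν₁ ν₂ : ℤ, μ.1 - ρ.1 = ν₁ * a + ν₂ * b ∧ μ.2 - ρ.2 = ν₁ * c + ν₂ * d)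
    (x₁ x₂ : ℝ) :
    (∑ μ ∈ R, B2 (((x₁ + μ.1) * d - (x₂ + μ.2) * b) / ((a * d - b * c : ℤ) : ℝ)))
      = (Int.gcd b d : ℝ) ^ 2 / |((a * d - b * c : ℤ) : ℝ)| *
          B2 ((((a * d - b * c : ℤ) : ℝ) / (Int.gcd b d : ℝ)) *
            ((x₁ * d - x₂ * b) / ((a * d - b * c : ℤ) : ℝ)))
    ∧ (∑ μ ∈ R, B2 ((-((x₁ + μ.1) * c) + (x₂ + μ.2) * a) / ((a * d - b * c : ℤ) : ℝ)))
      = (Int.gcd a c : ℝ) ^ 2 / |((a * d - b * c : ℤ) : ℝ)| *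
          B2 ((((a * d - b * c : ℤ) : ℝ) / (Int.gcd a c : ℝ)) *
            ((-(x₁ * c) + x₂ * a) / ((a * d - b * c : ℤ) : ℝ))) := by
  constructor
  · -- first distribution relation
    set g : ℕ := Int.gcd b d with hgdef
    have hg : 0 < g := by
      rcases Nat.eq_zero_or_pos g with h | h
      · exfalso
        rw [hgdef] at h
        obtain ⟨hb, hd⟩ := Int.gcd_eq_zero_iff.mp h
        rw [hb, hd] at hdet; simp at hdet
      · exact h
    have hdvdb : (g:ℤ) ∣ b := Int.gcd_dvd_left b d
    have hdvdd : (g:ℤ) ∣ d := Int.gcd_dvd_right b d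
    have hp : d = (g:ℤ) * (d / (g:ℤ)) := (Int.mul_ediv_cancel' hdvdd).symm
    have hq : -b = (g:ℤ) * (-(b / (g:ℤ))) := by
      rw [mul_neg, Int.mul_ediv_cancel' hdvdb]
    have hcop : Int.gcd (b / (g:ℤ)) (d / (g:ℤ)) = 1 := by
      rw [hgdef]; exact Int.gcd_div_gcd_div_gcd (by rw [← hgdef]; exact_mod_cast hg)
    have hbez0 : ((1:ℕ):ℤ) = (b / (g:ℤ)) * Int.gcdA (b / (g:ℤ)) (d / (g:ℤ))
        + (d / (g:ℤ)) * Int.gcdB (b / (g:ℤ)) (d / (g:ℤ)) := by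
      rw [← hcop]; exact Int.gcd_eq_gcd_ab _ _
    have hbez : (Int.gcdB (b / (g:ℤ)) (d / (g:ℤ))) * (d / (g:ℤ))
        + (-(Int.gcdA (b / (g:ℤ)) (d / (g:ℤ)))) * (-(b / (g:ℤ))) = 1 := by
      push_cast at hbez0; linarith [hbez0]
    have hw21 : ((b, d) : ℤ × ℤ).1 = -((1:ℤ) * g * (-(b / (g:ℤ)))) := by
      show b = _
      rw [one_mul, mul_neg, neg_neg, Int.mul_ediv_cancel' hdvdb]
    have hw22 : ((b, d) : ℤ × ℤ).2 = (1:ℤ) * g * (d / (g:ℤ)) := by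
      show d = _
      rw [one_mul, Int.mul_ediv_cancel' hdvdd]
    have h1 := mainlem (a * d - b * c) hdet d (-b) (d / (g:ℤ)) (-(b / (g:ℤ)))
      (Int.gcdB (b / (g:ℤ)) (d / (g:ℤ))) (-(Int.gcdA (b / (g:ℤ)) (d / (g:ℤ)))) 1 g hg
      hp hq hbez (by ring) (a, c) (b, d) (show d * (a,c).1 + (-b) * (a,c).2 = a * d - b * c by show d*a + -b*c = _; ring) hw21 hw22 R hR
      (x₁ * (d:ℝ) - x₂ * (b:ℝ))
    refine Eq.trans (Finset.sum_congr rfl fun μ _ => ?_) h1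
    congr 1
    push_cast
    ring
  · -- second distribution relation
    set g : ℕ := Int.gcd a c with hgdef
    have hg : 0 < g := by
      rcases Nat.eq_zero_or_pos g with h | h
      · exfalso
        rw [hgdef] at h
        obtain ⟨ha, hc⟩ := Int.gcd_eq_zero_iff.mp h
        rw [ha, hc] at hdet; simp at hdet
      · exact h
    have hdvda : (g:ℤ) ∣ a := Int.gcd_dvd_left a c
    have hdvdc : (g:ℤ) ∣ c := Int.gcd_dvd_right a c
    have hp : -c = (g:ℤ) * (-(c / (g:ℤ))) := by
      rw [mul_neg, Int.mul_ediv_cancel' hdvdc]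
    have hq : a = (g:ℤ) * (a / (g:ℤ)) := (Int.mul_ediv_cancel' hdvda).symm
    have hcop : Int.gcd (a / (g:ℤ)) (c / (g:ℤ)) = 1 := by
      rw [hgdef]; exact Int.gcd_div_gcd_div_gcd (by rw [← hgdef]; exact_mod_cast hg)
    have hbez0 : ((1:ℕ):ℤ) = (a / (g:ℤ)) * Int.gcdA (a / (g:ℤ)) (c / (g:ℤ))
        + (c / (g:ℤ)) * Int.gcdB (a / (g:ℤ)) (c / (g:ℤ)) := by
      rw [← hcop]; exact Int.gcd_eq_gcd_ab _ _
    have hbez : (-(Int.gcdB (a / (g:ℤ)) (c / (g:ℤ)))) * (-(c / (g:ℤ)))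
        + (Int.gcdA (a / (g:ℤ)) (c / (g:ℤ))) * (a / (g:ℤ)) = 1 := by
      push_cast at hbez0; linarith [hbez0]
    have hw21 : ((a, c) : ℤ × ℤ).1 = -((-1:ℤ) * g * (a / (g:ℤ))) := by
      show a = _
      rw [show ((-1:ℤ) * g * (a / (g:ℤ))) = -((g:ℤ) * (a / (g:ℤ))) by ring, neg_neg,
        Int.mul_ediv_cancel' hdvda]
    have hw22 : ((a, c) : ℤ × ℤ).2 = (-1:ℤ) * g * (-(c / (g:ℤ))) := by
      show c = _
      rw [show ((-1:ℤ) * g * (-(c / (g:ℤ)))) = (g:ℤ) * (c / (g:ℤ)) by ring,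
        Int.mul_ediv_cancel' hdvdc]
    have hR2 : ∀ μ : ℤ × ℤ, ∃! ρ : ℤ × ℤ, ρ ∈ R ∧
        ∃ ν₁ ν₂ : ℤ, μ.1 - ρ.1 = ν₁ * ((b,d) : ℤ × ℤ).1 + ν₂ * ((a,c) : ℤ × ℤ).1
          ∧ μ.2 - ρ.2 = ν₁ * ((b,d) : ℤ × ℤ).2 + ν₂ * ((a,c) : ℤ × ℤ).2 := by
      intro μ
      obtain ⟨ρ, ⟨hmem, ν₁, ν₂, hA, hB⟩, huniq⟩ := hR μ
      refine ⟨ρ, ⟨hmem, ν₂, ν₁, by dsimp only; linarith, by dsimp only; linarith⟩, ?_⟩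
      rintro y ⟨hy, ν₁', ν₂', hA', hB'⟩
      dsimp only at hA' hB'
      exact huniq y ⟨hy, ν₂', ν₁', by linarith, by linarith⟩
    have h1 := mainlem (a * d - b * c) hdet (-c) a (-(c / (g:ℤ))) (a / (g:ℤ))
      (-(Int.gcdB (a / (g:ℤ)) (c / (g:ℤ)))) (Int.gcdA (a / (g:ℤ)) (c / (g:ℤ))) (-1) g hg
      hp hq hbez (by ring) (b, d) (a, c)
      (show (-c) * ((b,d) : ℤ × ℤ).1 + a * ((b,d) : ℤ × ℤ).2 = a * d - b * c by
        show -c * b + a * d = _; ring)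
      hw21 hw22 R hR2
      (-(x₁ * (c:ℝ)) + x₂ * (a:ℝ))
    refine Eq.trans (Finset.sum_congr rfl fun μ _ => ?_) h1
    congr 1
    push_cast
    ring
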